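/- Let I ⊆ ℝ be an open interval, n ≥ 1, and a_1,...,a_n pairwise distinct points of I. Then for every n-times continuously differentiable f : I → ℝ and every x ∈ I: f(x) = Σ_{α=1}^n (f(a_α) + ∫_{a_α}^x f^(n)(t) (a_α − t)^{n-1}/(n−1)! dt) · Π_{j≠α} (x − a_j)/(a_α − a_j). -/

import Mathlib

open Finset intervalIntegral Nat

open Polynomial in
private lemma lagrange_eval (n : ℕ) (a : Fin n → ℝ) (hinj : Function.Injective a)
    (P : ℝ[X]) (hdeg : P.degree < n) (x : ℝ) :
    P.eval x = ∑ α : Fin n,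
      P.eval (a α) * ∏ j ∈ Finset.univ.erase α, (x - a j) / (a α - a j) := by
  have hinjOn : Set.InjOn a (Finset.univ : Finset (Fin n)) := fun i _ j _ h => hinj h
  have hdeg' : P.degree < ((Finset.univ : Finset (Fin n)).card : ℕ) := by
    simpa using hdeg
  have h := Lagrange.eq_interpolate hinjOn hdeg'
  conv_lhs => rw [h]
  rw [Lagrange.interpolate_apply, Polynomial.eval_finset_sum]
  refine Finset.sum_congr rfl fun i _ => ?_
  rw [Polynomial.eval_mul, Polynomial.eval_C]
  congr 1
  rw [Lagrange.basis, Polynomial.eval_prod]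
  refine Finset.prod_congr rfl fun j _ => ?_
  simp [Lagrange.basisDivisor, div_eq_inv_mul, mul_comm]

theorem stmt_19 (I : Set ℝ) (hI : IsOpen I) (hne : I.Nonempty) (hconn : I.OrdConnected)
    (n : ℕ) (hn : 1 ≤ n) (a : Fin n → ℝ) (hinj : Function.Injective a)
    (haI : ∀ α, a α ∈ I) :
    ∀ f : ℝ → ℝ, ContDiffOn ℝ (n : ℕ∞) f I → ∀ x ∈ I,
      f x = ∑ α : Fin n,
        (f (a α) + ∫ t in (a α)..x,
            iteratedDerivWithin n f I t * (a α - t) ^ (n - 1)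
              / (Nat.factorial (n - 1) : ℝ))
          * ∏ j ∈ Finset.univ.erase α, (x - a j) / (a α - a j) := by
  obtain ⟨m, rfl⟩ : ∃ m, n = m + 1 := ⟨n - 1, (Nat.succ_pred_eq_of_pos hn).symm⟩
  intro f hf x hx
  have hud : UniqueDiffOn ℝ I := hI.uniqueDiffOn
  have hfm : ContDiffOn ℝ (m : ℕ∞) f I := hf.of_le (by exact_mod_cast Nat.le_succ m)
  have hdiff : DifferentiableOn ℝ (iteratedDerivWithin m f I) I :=
    hf.differentiableOn_iteratedDerivWithin (by exact_mod_cast Nat.lt_succ_self m) hud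
  have hcont : ContinuousOn (iteratedDerivWithin (m + 1) f I) I :=
    hf.continuousOn_iteratedDerivWithin (by exact_mod_cast le_rfl) hud
  -- Step 1
  have coeff : ∀ b ∈ I, f b + (∫ t in b..x,
      iteratedDerivWithin (m + 1) f I t * (b - t) ^ (m + 1 - 1)
        / (Nat.factorial (m + 1 - 1) : ℝ)) = taylorWithinEval f m I x b := by
    intro b hb
    have hder : ∀ t ∈ Set.uIcc b x, HasDerivAt (fun y => taylorWithinEval f m I y b)
        (((m ! : ℝ)⁻¹ * (b - t) ^ m) • iteratedDerivWithin (m + 1) f I t) t := by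
      intro t ht
      have htI : t ∈ I := hconn.uIcc_subset hb hx ht
      exact (hasDerivWithinAt_taylorWithinEval hud self_mem_nhdsWithin htI
        subset_rfl hfm (hdiff t htI)).hasDerivAt (hI.mem_nhds htI)
    have hint : IntervalIntegrable
        (fun t => ((m ! : ℝ)⁻¹ * (b - t) ^ m) • iteratedDerivWithin (m + 1) f I t)
        MeasureTheory.volume b x := by
      apply ContinuousOn.intervalIntegrable
      exact (continuousOn_const.mul ((continuousOn_const.sub continuousOn_id).pow m)).smul
        (hcont.mono (hconn.uIcc_subset hb hx))
    have hftc := intervalIntegral.integral_eq_sub_of_hasDerivAt hder hint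
    rw [taylorWithinEval_self] at hftc
    have : (∫ t in b..x, iteratedDerivWithin (m + 1) f I t * (b - t) ^ (m + 1 - 1)
        / (Nat.factorial (m + 1 - 1) : ℝ))
        = ∫ t in b..x, ((m ! : ℝ)⁻¹ * (b - t) ^ m) • iteratedDerivWithin (m + 1) f I t := by
      refine intervalIntegral.integral_congr fun t _ => ?_
      simp only [Nat.add_sub_cancel, smul_eq_mul]
      field_simp
    rw [this, hftc]
    ring
  -- Step 2: the Taylor polynomial as a `Polynomial ℝ`
  set P : Polynomial ℝ := ∑ k ∈ Finset.range (m + 1),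
      Polynomial.C ((k ! : ℝ)⁻¹ * iteratedDerivWithin k f I x)
        * (Polynomial.X - Polynomial.C x) ^ k with hP
  have hPeval : ∀ y : ℝ, P.eval y = taylorWithinEval f m I x y := by
    intro y
    rw [taylor_within_apply, hP, Polynomial.eval_finset_sum]
    refine Finset.sum_congr rfl fun k _ => ?_
    simp only [Polynomial.eval_mul, Polynomial.eval_C, Polynomial.eval_pow, Polynomial.eval_sub,
      Polynomial.eval_X, smul_eq_mul]
    ring
  have hdeg : P.degree < (m + 1 : ℕ) := by
    apply lt_of_le_of_lt (Polynomial.degree_sum_le _ _)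
    rw [Finset.sup_lt_iff (by exact WithBot.bot_lt_coe _)]
    intro k hk
    calc (Polynomial.C ((k ! : ℝ)⁻¹ * iteratedDerivWithin k f I x)
            * (Polynomial.X - Polynomial.C x) ^ k).degree
        ≤ ((Polynomial.X - Polynomial.C x) ^ k).degree := by
          refine (Polynomial.degree_mul_le _ _).trans ?_
          have h0 := add_le_add_left
            (Polynomial.degree_C_le (a := (k ! : ℝ)⁻¹ * iteratedDerivWithin k f I x))
            (((Polynomial.X - Polynomial.C x) ^ k).degree)
          simpa using h0
      _ ≤ (k : WithBot ℕ) := by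
          simpa using Polynomial.degree_pow_le_of_le k (Polynomial.degree_X_sub_C_le x)
      _ < ((m + 1 : ℕ) : WithBot ℕ) := by
          exact_mod_cast Finset.mem_range.mp hk
  -- Step 3: Lagrange interpolation
  have hlag := lagrange_eval (m + 1) a hinj P hdeg x
  rw [hPeval, taylorWithinEval_self] at hlag
  rw [hlag]
  refine Finset.sum_congr rfl fun α _ => ?_
  rw [hPeval, ← coeff (a α) (haI α)]
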